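/- arXiv:2211.07544 — 2 statements merged into one kernel-verified Lean document; each statement's English description precedes it below -/
import Mathlib

section
/- (Theorem 2, maximum invariance, upper-bound direction.) For every Markov policy π, every 0 ≤ k ≤ N and every x ∈ X, the policy safety value satisfies V_k^π(x) ≤ W_k(x), where V_k^π(x) = P_{k,x}^π( x_j ∈ A for all k ≤ j ≤ N ) and W_k are the maximal DP value functions. Consequently sup_{π} V_k^π(x) ≤ W_k(x). -/
open MeasureTheory ProbabilityTheory Set

set_option linter.unusedSectionVars false

noncomputable section

namespace StochasticSafety

variable {X U : Type*} [MeasurableSpace X] [MeasurableSpace U]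

/-- A Markov policy: a sequence of (Borel-)measurable maps from states to actions. -/
structure Policy (X U : Type*) [MeasurableSpace X] [MeasurableSpace U] where
  act : ℕ → X → U
  measurable_act : ∀ k, Measurable (act k)

/-- The closed-loop kernel `κ_k^π(·|x) = T(·|x, μ_k(x))` of a policy at time `k`. -/
def Policy.kernel (T : Kernel (X × U) X) (π : Policy X U) (k : ℕ) : Kernel X X :=
  T.comap (fun x => (x, π.act k x)) (measurable_id.prodMk (π.measurable_act k))

/-- One step of the closed-loop trajectory evolution at time `j`: given the trajectory
built so far, sample `y` from `κ` applied at coordinate `j` and record it at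
coordinate `j + 1`. -/
def step (κ : Kernel X X) (j : ℕ) : Kernel (ℕ → X) (ℕ → X) :=
  Kernel.map (Kernel.id ×ₖ κ.comap (fun ω => ω j) (measurable_pi_apply j))
    (fun p => Function.update p.1 (j + 1) p.2)

/-- Kernel describing `m` steps of the trajectory evolution, starting at time `k`,
under the time-dependent kernels `κ`. -/
def evolve (κ : ℕ → Kernel X X) : ℕ → ℕ → Kernel (ℕ → X) (ℕ → X)
  | _, 0 => Kernel.id
  | k, (m + 1) => (evolve κ (k + 1) m) ∘ₖ step (κ k) k

/-- The law `P_{k,x}^π` of the closed-loop trajectory `(x_k, …, x_N)` started at `x`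
at time `k` under policy `π` (finite Ionescu–Tulcea composition of the closed-loop
kernels): the states `x_k, …, x_N` are recorded in coordinates `k, …, N` of `ℕ → X`,
all other coordinates carry the irrelevant initial value `x`. -/
def trajLaw (T : Kernel (X × U) X) (π : Policy X U) (N k : ℕ) (x : X) :
    Measure (ℕ → X) :=
  evolve (π.kernel T) k (N - k) (fun _ => x)

/-- The event that the trajectory stays in `A` at all times `j` with `k ≤ j ≤ N`. -/
def safeEvent (A : Set X) (k N : ℕ) : Set (ℕ → X) :=
  {ω | ∀ j, k ≤ j → j ≤ N → ω j ∈ A}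

/-- The event that the trajectory visits `A` at some time `j` with `k ≤ j ≤ N`. -/
def reachEvent (A : Set X) (k N : ℕ) : Set (ℕ → X) :=
  {ω | ∃ j, k ≤ j ∧ j ≤ N ∧ ω j ∈ A}


variable [StandardBorelSpace X] [TopologicalSpace U]
  [TopologicalSpace.MetrizableSpace U] [CompactSpace U] [Nonempty U] [BorelSpace U]

section Aux

variable {X U : Type*} [MeasurableSpace X] [MeasurableSpace U]

lemma step_apply (κ : Kernel X X) [IsSFiniteKernel κ] (j : ℕ) (ω : ℕ → X) :
    step κ j ω = (κ (ω j)).map (fun y => Function.update ω (j + 1) y) := by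
  rw [step, Kernel.map_apply _ measurable_update', Kernel.prod_apply, Kernel.id_apply,
    Kernel.comap_apply, Measure.dirac_prod,
    Measure.map_map measurable_update' measurable_prodMk_left]
  rfl

lemma measurableSet_safeEvent {A : Set X} (hA : MeasurableSet A) (k N : ℕ) :
    MeasurableSet (safeEvent A k N) := by
  have : safeEvent A k N
      = ⋂ j, ⋂ (_ : k ≤ j), ⋂ (_ : j ≤ N), (fun ω : ℕ → X => ω j) ⁻¹' A := by
    ext ω; simp [safeEvent]
  rw [this]
  exact MeasurableSet.iInter fun j => MeasurableSet.iInter fun _ =>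
    MeasurableSet.iInter fun _ => (measurable_pi_apply j) hA

lemma evolve_preserves [MeasurableSingletonClass X] (κ : ℕ → Kernel X X)
    [∀ i, IsSFiniteKernel (κ i)] :
    ∀ m k j, j ≤ k → ∀ ω : ℕ → X, evolve κ k m ω {ω' | ω' j ≠ ω j} = 0 := by
  intro m
  induction m with
  | zero =>
    intro k j hj ω
    have hs : MeasurableSet {ω' : ℕ → X | ω' j ≠ ω j} := by
      have he : {ω' : ℕ → X | ω' j ≠ ω j} = (fun ω' : ℕ → X => ω' j) ⁻¹' ({ω j}ᶜ) := rfl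
      rw [he]; exact (measurable_pi_apply j) (measurableSet_singleton (ω j)).compl
    show Kernel.id ω _ = 0
    rw [Kernel.id_apply, Measure.dirac_apply' _ hs]
    simp
  | succ m ih =>
    intro k j hj ω
    have hs : MeasurableSet {ω' : ℕ → X | ω' j ≠ ω j} := by
      have he : {ω' : ℕ → X | ω' j ≠ ω j} = (fun ω' : ℕ → X => ω' j) ⁻¹' ({ω j}ᶜ) := rfl
      rw [he]; exact (measurable_pi_apply j) (measurableSet_singleton (ω j)).compl
    show (evolve κ (k + 1) m ∘ₖ step (κ k) k) ω _ = 0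
    rw [Kernel.comp_apply' _ _ _ hs, step_apply,
      lintegral_map (Kernel.measurable_coe _ hs) (measurable_update ω)]
    have hz : ∀ y : X, evolve κ (k + 1) m (Function.update ω (k + 1) y) {ω' | ω' j ≠ ω j} = 0 := by
      intro y
      have hval : Function.update ω (k + 1) y j = ω j :=
        Function.update_of_ne (by omega) _ _
    
      have := ih (k + 1) j (by omega) (Function.update ω (k + 1) y)
      rwa [hval] at this
    simp [hz]

end Aux

section Main

variable {X U : Type*} [MeasurableSpace X] [MeasurableSpace U]
variable [StandardBorelSpace X] [TopologicalSpace U]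
  [TopologicalSpace.MetrizableSpace U] [CompactSpace U] [Nonempty U] [BorelSpace U]

variable (T : Kernel (X × U) X) [IsMarkovKernel T]
  (N : ℕ) (A : Set X) (hA : MeasurableSet A)
  (W : ℕ → X → ℝ) (hWmeas : ∀ k, Measurable (W k))
  (hWN : ∀ x, W N x = A.indicator 1 x)
  (hW : ∀ k < N, ∀ x,
    W k x = ⨆ u : U, A.indicator (fun x' => ∫ y, W (k + 1) y ∂(T (x', u))) x)

include hWmeas hWN hW in
lemma W_bounds : ∀ m k, k + m = N → ∀ x, 0 ≤ W k x ∧ W k x ≤ 1 := by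
  intro m
  induction m with
  | zero =>
    intro k hk x
    have : k = N := by omega
    subst this
    rw [hWN x]
    constructor
    · exact Set.indicator_nonneg (fun _ _ => zero_le_one) x
    · by_cases h : x ∈ A <;> simp [Set.indicator_apply, h]
  | succ m ih =>
    intro k hk x
    have hkN : k < N := by omega
    have hbd := ih (k + 1) (by omega)
    have hint : ∀ (x' : X) (u : U), Integrable (W (k + 1)) (T (x', u)) := by
      intro x' u
      refine (integrable_const (1 : ℝ)).mono' (hWmeas (k + 1)).aestronglyMeasurable ?_
      refine ae_of_all _ fun y => ?_
      rw [Real.norm_eq_abs, abs_le]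
      exact ⟨by linarith [(hbd y).1], (hbd y).2⟩
    have hI : ∀ (x' : X) (u : U), 0 ≤ (∫ y, W (k + 1) y ∂(T (x', u)))
        ∧ (∫ y, W (k + 1) y ∂(T (x', u))) ≤ 1 := by
      intro x' u
      constructor
      · exact integral_nonneg fun y => (hbd y).1
      · calc (∫ y, W (k + 1) y ∂(T (x', u))) ≤ ∫ _, (1 : ℝ) ∂(T (x', u)) :=
              integral_mono (hint x' u) (integrable_const 1) fun y => (hbd y).2
          _ = 1 := by simp
    have h1 : ∀ u : U, A.indicator (fun x' => ∫ y, W (k + 1) y ∂(T (x', u))) x ≤ 1 := by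
      intro u
      by_cases h : x ∈ A <;> simp [Set.indicator_apply, h, (hI x u).2]
    have h0 : ∀ u : U, 0 ≤ A.indicator (fun x' => ∫ y, W (k + 1) y ∂(T (x', u))) x := by
      intro u
      exact Set.indicator_nonneg (fun x' _ => (hI x' u).1) x
    rw [hW k hkN x]
    refine ⟨le_ciSup_of_le ⟨1, ?_⟩ (Classical.arbitrary U) (h0 _), Real.iSup_le h1 zero_le_one⟩
    rintro r ⟨u, rfl⟩
    exact h1 u

include hA hWmeas hWN hW in
lemma key (π : Policy X U) :
    ∀ m k, k + m = N → ∀ ω : ℕ → X,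
      evolve (π.kernel T) k m ω (safeEvent A k N) ≤ ENNReal.ofReal (W k (ω k)) := by
  have Wbd := W_bounds T N A W hWmeas hWN hW
  intro m
  induction m with
  | zero =>
    intro k hk ω
    have hkN : k = N := by omega
    subst hkN
    show Kernel.id ω _ ≤ _
    rw [Kernel.id_apply, Measure.dirac_apply' _ (measurableSet_safeEvent hA k k), hWN]
    by_cases h : ω k ∈ A
    · have hω : ω ∈ safeEvent A k k := by
        intro j hj hj'
        have : j = k := le_antisymm hj' hj
        rwa [this]
      simp [Set.indicator_of_mem hω, Set.indicator_of_mem h]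
    · have hω : ω ∉ safeEvent A k k := fun hc => h (hc k le_rfl le_rfl)
      simp [Set.indicator_of_notMem hω]
  | succ m ih =>
    intro k hk ω
    have hkN : k < N := by omega
    have hM : ∀ i, IsMarkovKernel (π.kernel T i) := fun i => by
      rw [Policy.kernel]; infer_instance
    set κ := π.kernel T with hκ
    haveI : ∀ i, IsSFiniteKernel (κ i) := fun i => by haveI := hM i; infer_instance
    haveI : IsSFiniteKernel (κ k) := by haveI := hM k; infer_instance
    have hsE := measurableSet_safeEvent (X := X) hA k N
    have hsE' := measurableSet_safeEvent (X := X) hA (k + 1) N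
    have hsafe : safeEvent A k N
        = ((fun ω' : ℕ → X => ω' k) ⁻¹' A) ∩ safeEvent A (k + 1) N := by
      ext ω'
      constructor
      · intro h
        exact ⟨h k le_rfl (le_of_lt hkN), fun j hj hj' => h j (by omega) hj'⟩
      · rintro ⟨h1, h2⟩ j hj hj'
        rcases eq_or_lt_of_le hj with rfl | hlt
        · exact h1
        · exact h2 j (by omega) hj'
    show (evolve κ (k + 1) m ∘ₖ step (κ k) k) ω (safeEvent A k N) ≤ _
    rw [Kernel.comp_apply' _ _ _ hsE, step_apply,
      lintegral_map (Kernel.measurable_coe _ hsE) (measurable_update ω)]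
    by_cases hx : ω k ∈ A
    · -- current state safe
      have hstep : ∀ y : X,
          evolve κ (k + 1) m (Function.update ω (k + 1) y) (safeEvent A k N)
            ≤ ENNReal.ofReal (W (k + 1) y) := by
        intro y
        have hsub : safeEvent A k N ⊆ safeEvent A (k + 1) N := by
          rw [hsafe]; exact Set.inter_subset_right
        refine le_trans (measure_mono hsub) ?_
        have := ih (k + 1) (by omega) (Function.update ω (k + 1) y)
        rwa [Function.update_self] at this
      calc (∫⁻ y, evolve κ (k + 1) m (Function.update ω (k + 1) y) (safeEvent A k N)
              ∂(κ k (ω k)))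
          ≤ ∫⁻ y, ENNReal.ofReal (W (k + 1) y) ∂(κ k (ω k)) := lintegral_mono hstep
        _ = ENNReal.ofReal (∫ y, W (k + 1) y ∂(κ k (ω k))) := by
            refine (ofReal_integral_eq_lintegral_ofReal ?_ ?_).symm
            · refine (integrable_const (1 : ℝ)).mono'
                (hWmeas (k + 1)).aestronglyMeasurable (ae_of_all _ fun y => ?_)
              rw [Real.norm_eq_abs, abs_le]
              have h := Wbd m (k + 1) (by omega) y
              exact ⟨by linarith [h.1], h.2⟩
            · exact ae_of_all _ fun y => (Wbd m (k + 1) (by omega) y).1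
        _ ≤ ENNReal.ofReal (W k (ω k)) := by
            refine ENNReal.ofReal_le_ofReal ?_
            have hκapp : κ k (ω k) = T (ω k, π.act k (ω k)) := by
              rw [hκ, Policy.kernel, Kernel.comap_apply]
            rw [hκapp, hW k hkN (ω k)]
            have hterm : ∀ u : U,
                A.indicator (fun x' => ∫ y, W (k + 1) y ∂(T (x', u))) (ω k) ≤ 1 := by
              intro u
              by_cases h : ω k ∈ A
              · rw [Set.indicator_of_mem h]
                calc (∫ y, W (k + 1) y ∂(T (ω k, u))) ≤ ∫ _, (1 : ℝ) ∂(T (ω k, u)) := by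
                      refine integral_mono ?_ (integrable_const 1)
                        (fun y => (Wbd m (k + 1) (by omega) y).2)
                      refine (integrable_const (1 : ℝ)).mono'
                        (hWmeas (k + 1)).aestronglyMeasurable (ae_of_all _ fun y => ?_)
                      rw [Real.norm_eq_abs, abs_le]
                      have h' := Wbd m (k + 1) (by omega) y
                      exact ⟨by linarith [h'.1], h'.2⟩
                  _ = 1 := by simp
              · rw [Set.indicator_of_notMem h]; exact zero_le_one
            have hle := le_ciSup (f := fun u : U =>
                A.indicator (fun x' => ∫ y, W (k + 1) y ∂(T (x', u))) (ω k))
              ⟨1, by rintro r ⟨u, rfl⟩; exact hterm u⟩ (π.act k (ω k))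
            rwa [Set.indicator_of_mem hx] at hle
    · -- current state unsafe: measure is zero
      have hz : ∀ y : X,
          evolve κ (k + 1) m (Function.update ω (k + 1) y) (safeEvent A k N) = 0 := by
        intro y
        have hsub : safeEvent A k N
            ⊆ {ω' : ℕ → X | ω' k ≠ Function.update ω (k + 1) y k} := by
          intro ω' hω'
          have h1 : ω' k ∈ A := hω' k le_rfl (le_of_lt hkN)
          have h2 : Function.update ω (k + 1) y k = ω k :=
            Function.update_of_ne (by omega) _ _
          rw [Set.mem_setOf_eq, h2]
          intro hc
          exact hx (hc ▸ h1)
        have hnull := evolve_preserves κ m (k + 1) k (by omega) (Function.update ω (k + 1) y)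
        exact le_antisymm (le_trans (measure_mono hsub) (le_of_eq hnull)) zero_le

      simp only [hz, lintegral_zero]
      exact zero_le

end Main


/-- Theorem 2, maximum invariance, upper bound: for every Markov policy
`π`, every `0 ≤ k ≤ N` and every `x`, the policy safety value
`V_k^π(x) = P_{k,x}^π(x_j ∈ A for all k ≤ j ≤ N)` is at most the maximal DP value
`W_k(x)`; consequently `sup_π V_k^π(x) ≤ W_k(x)`. -/
theorem policy_value_le_max_dp_value
    (T : Kernel (X × U) X) [IsMarkovKernel T]
    (N : ℕ) (A : Set X) (hA : MeasurableSet A)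
    (W : ℕ → X → ℝ) (hWmeas : ∀ k, Measurable (W k))
    (hWN : ∀ x, W N x = A.indicator 1 x)
    (hW : ∀ k < N, ∀ x,
      W k x = ⨆ u : U, A.indicator (fun x' => ∫ y, W (k + 1) y ∂(T (x', u))) x) :
    (∀ π : Policy X U, ∀ k ≤ N, ∀ x,
        (trajLaw T π N k x (safeEvent A k N)).toReal ≤ W k x) ∧
    (∀ k ≤ N, ∀ x,
        (⨆ π : Policy X U, (trajLaw T π N k x (safeEvent A k N)).toReal) ≤ W k x) := by
  have Wbd := W_bounds T N A W hWmeas hWN hW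
  have main : ∀ π : Policy X U, ∀ k ≤ N, ∀ x,
      (trajLaw T π N k x (safeEvent A k N)).toReal ≤ W k x := by
    intro π k hk x
    have hkm : k + (N - k) = N := by omega
    have h := key T N A hA W hWmeas hWN hW π (N - k) k hkm (fun _ => x)
    rw [trajLaw]
    calc (evolve (π.kernel T) k (N - k) (fun _ => x) (safeEvent A k N)).toReal
        ≤ (ENNReal.ofReal (W k x)).toReal :=
          ENNReal.toReal_mono ENNReal.ofReal_ne_top h
      _ = W k x := ENNReal.toReal_ofReal (Wbd (N - k) k hkm x).1
  refine ⟨main, fun k hk x => ?_⟩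
  haveI : Nonempty (Policy X U) :=
    ⟨⟨fun _ _ => Classical.arbitrary U, fun _ => measurable_const⟩⟩
  exact ciSup_le fun π => main π k hk x


end StochasticSafety
end
end

section
/- (Theorem 2, maximum invariance, attainment.) Suppose that for each 0 ≤ k < N there exists a Borel-measurable map μ_k^* : X → U such that 1_A(x) ∫_X W_{k+1}(y) T(dy|x,μ_k^*(x)) = W_k(x) for all x ∈ X (i.e. the supremum in the DP recursion is attained by a measurable selector). Then the Markov policy π^* = (μ_0^*,…,μ_{N−1}^*) satisfies V_k^{π^*}(x) = W_k(x) for all 0 ≤ k ≤ N and x ∈ X, where V_k^{π^*}(x) = P_{k,x}^{π^*}( x_j ∈ A for all k ≤ j ≤ N ); in particular W_k(x) = max_{π} P_{k,x}^π( x_j ∈ A for all k ≤ j ≤ N ), the maximum being over all Markov policies. -/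
open MeasureTheory ProbabilityTheory Set
open scoped ENNReal Classical

noncomputable section

namespace StochasticSafety

variable {X U : Type*} [MeasurableSpace X] [MeasurableSpace U]

/-- auxiliary: iterated safety probability -/
def safeProb (κ : ℕ → Kernel X X) (A : Set X) : ℕ → ℕ → X → ℝ≥0∞
  | _, 0 => A.indicator 1
  | k, (m + 1) => A.indicator fun x' => ∫⁻ y, safeProb κ A (k + 1) m y ∂ (κ k x')

lemma measurable_safeProb (κ : ℕ → Kernel X X) [∀ k, IsMarkovKernel (κ k)] (A : Set X) (hA : MeasurableSet A) :
    ∀ m k, Measurable (safeProb κ A k m) := by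
  intro m
  induction m with
  | zero => intro k; exact (measurable_const.indicator hA)
  | succ m ih =>
    intro k
    refine Measurable.indicator ?_ hA
    exact Measurable.lintegral_kernel_prod_right' ((ih (k + 1)).comp measurable_snd)

lemma measurable_update_pair (j : ℕ) :
    Measurable (fun p : (ℕ → X) × X => Function.update p.1 j p.2) := by
  refine measurable_pi_lambda _ fun i => ?_
  simp only [Function.update_apply]
  by_cases h : i = j
  · simp only [h, if_true]
    exact measurable_snd
  · simp only [h, if_false]
    exact (measurable_pi_apply i).comp measurable_fst

lemma measurableSet_safeSet (A : Set X) (hA : MeasurableSet A) (K M : ℕ) :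
    MeasurableSet {η : ℕ → X | ∀ j, K ≤ j → j ≤ M → η j ∈ A} := by
  have : {η : ℕ → X | ∀ j, K ≤ j → j ≤ M → η j ∈ A}
      = ⋂ j, {η : ℕ → X | K ≤ j → j ≤ M → η j ∈ A} := by
    ext η; simp [Set.mem_iInter]
  rw [this]
  refine MeasurableSet.iInter fun j => ?_
  by_cases h1 : K ≤ j
  · by_cases h2 : j ≤ M
    · have : {η : ℕ → X | K ≤ j → j ≤ M → η j ∈ A} = (fun η : ℕ → X => η j) ⁻¹' A := by
        ext η; simp [h1, h2]
      rw [this]; exact (measurable_pi_apply j) hA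
    · have : {η : ℕ → X | K ≤ j → j ≤ M → η j ∈ A} = Set.univ := by
        ext η; simp [h2]
      rw [this]; exact MeasurableSet.univ
  · have : {η : ℕ → X | K ≤ j → j ≤ M → η j ∈ A} = Set.univ := by
      ext η; simp [h1]
    rw [this]; exact MeasurableSet.univ

lemma evolve_succ_apply (κ : ℕ → Kernel X X) [∀ k, IsMarkovKernel (κ k)] (k m : ℕ)
    (ω : ℕ → X) {E : Set (ℕ → X)} (hE : MeasurableSet E) :
    evolve κ k (m + 1) ω E
      = ∫⁻ y, evolve κ (k + 1) m (Function.update ω (k + 1) y) E ∂ (κ k (ω k)) := by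
  have hg : Measurable fun η => evolve κ (k + 1) m η E := Kernel.measurable_coe _ hE
  have hstep : step (κ k) k ω
      = ((Measure.dirac ω).prod (κ k (ω k))).map
          (fun p : (ℕ → X) × X => Function.update p.1 (k + 1) p.2) := by
    rw [step, Kernel.map_apply _ (measurable_update_pair (k + 1))]
    rw [Kernel.prod_apply (Kernel.id)
      ((κ k).comap (fun ω : ℕ → X => ω k) (measurable_pi_apply k)) ω]
    rw [Kernel.id_apply, Kernel.comap_apply]
  rw [show evolve κ k (m + 1) = (evolve κ (k + 1) m) ∘ₖ step (κ k) k from rfl,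
    Kernel.comp_apply' _ _ _ hE, hstep,
    lintegral_map hg (measurable_update_pair (k + 1)),
    lintegral_prod (fun p : (ℕ → X) × X => evolve κ (k + 1) m (Function.update p.1 (k + 1) p.2) E)
      ((hg.comp (measurable_update_pair (k + 1))).aemeasurable),
    lintegral_dirac' _ ]
  exact Measurable.lintegral_prod_right'
    (hg.comp (measurable_update_pair (k + 1)))

lemma safe_iff (A : Set X) (K k : ℕ) (hKk : K ≤ k) (ω : ℕ → X) :
    (∀ j, K ≤ j → j ≤ k → ω j ∈ A) ↔ ((∀ j, K ≤ j → j < k → ω j ∈ A) ∧ ω k ∈ A) := by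
  constructor
  · intro h
    exact ⟨fun j hK hj => h j hK hj.le, h k hKk le_rfl⟩
  · rintro ⟨h1, h2⟩ j hK hj
    rcases Nat.lt_or_ge j k with h | h
    · exact h1 j hK h
    · have : j = k := le_antisymm hj h
      rwa [this]

lemma evolve_safe (κ : ℕ → Kernel X X) [∀ k, IsMarkovKernel (κ k)] (A : Set X)
    (hA : MeasurableSet A) :
    ∀ m K k, K ≤ k → ∀ ω : ℕ → X,
      evolve κ k m ω {η | ∀ j, K ≤ j → j ≤ k + m → η j ∈ A}
        = (if ∀ j, K ≤ j → j < k → ω j ∈ A then 1 else 0) * safeProb κ A k m (ω k) := by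
  intro m
  induction m with
  | zero =>
    intro K k hKk ω
    rw [show evolve κ k 0 = Kernel.id from rfl, Kernel.id_apply,
      Measure.dirac_apply' _ (measurableSet_safeSet A hA K (k + 0))]
    simp only [Nat.add_zero, Set.indicator_apply, Set.mem_setOf_eq, safeProb]
    by_cases hpre : ∀ j, K ≤ j → j < k → ω j ∈ A
    · by_cases hk : ω k ∈ A
      · have h : ∀ j, K ≤ j → j ≤ k → ω j ∈ A := (safe_iff A K k hKk ω).2 ⟨hpre, hk⟩
        simp [if_pos h, if_pos hpre, if_pos hk]
      · have h : ¬ ∀ j, K ≤ j → j ≤ k → ω j ∈ A :=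
          fun hh => hk ((safe_iff A K k hKk ω).1 hh).2
        simp [if_neg h, if_pos hpre, if_neg hk]
    · have h : ¬ ∀ j, K ≤ j → j ≤ k → ω j ∈ A :=
        fun hh => hpre ((safe_iff A K k hKk ω).1 hh).1
      simp [if_neg h, if_neg hpre]
  | succ m ih =>
    intro K k hKk ω
    have hE := measurableSet_safeSet A hA K (k + (m + 1))
    rw [evolve_succ_apply κ k m ω hE]
    have key : ∀ y : X,
        evolve κ (k + 1) m (Function.update ω (k + 1) y)
            {η | ∀ j, K ≤ j → j ≤ k + (m + 1) → η j ∈ A}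
          = ((if ∀ j, K ≤ j → j < k → ω j ∈ A then 1 else 0) *
              (if ω k ∈ A then 1 else 0)) * safeProb κ A (k + 1) m y := by
      intro y
      have heq : {η : ℕ → X | ∀ j, K ≤ j → j ≤ k + (m + 1) → η j ∈ A}
          = {η : ℕ → X | ∀ j, K ≤ j → j ≤ (k + 1) + m → η j ∈ A} := by
        have : k + (m + 1) = (k + 1) + m := by ring
        rw [this]
      rw [heq, ih K (k + 1) (le_trans hKk (Nat.le_succ k)) (Function.update ω (k + 1) y)]
      have h1 : Function.update ω (k + 1) y (k + 1) = y := Function.update_self _ _ _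
      have hupd : ∀ j, j < k + 1 → Function.update ω (k + 1) y j = ω j := by
        intro j hj
        exact Function.update_of_ne (by omega) _ _
      have hiff : (∀ j, K ≤ j → j < k + 1 → Function.update ω (k + 1) y j ∈ A)
          ↔ ((∀ j, K ≤ j → j < k → ω j ∈ A) ∧ ω k ∈ A) := by
        constructor
        · intro hh
          constructor
          · intro j hK hj
            rw [← hupd j (by omega)]
            exact hh j hK (by omega)
          · rw [← hupd k (by omega)]
            exact hh k hKk (by omega)
        · rintro ⟨hp, hk⟩ j hK hj
          rw [hupd j hj]
          rcases Nat.lt_or_ge j k with h | h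
          · exact hp j hK h
          · have : j = k := by omega
            rwa [this]
      rw [h1]
      congr 1
      rw [show ((if ∀ j, K ≤ j → j < k + 1 → Function.update ω (k + 1) y j ∈ A then (1:ℝ≥0∞) else 0)
          = if ((∀ j, K ≤ j → j < k → ω j ∈ A) ∧ ω k ∈ A) then 1 else 0) by simp only [hiff]]
      by_cases hpre : ∀ j, K ≤ j → j < k → ω j ∈ A
      · by_cases hk : ω k ∈ A
        · simp [if_pos (And.intro hpre hk), if_pos hpre, if_pos hk]
        · simp [if_neg (fun hc : _ ∧ _ => hk hc.2), if_pos hpre, if_neg hk]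
      · simp [if_neg (fun hc : _ ∧ _ => hpre hc.1), if_neg hpre]
    simp_rw [key]
    rw [lintegral_const_mul _ (measurable_safeProb κ A hA m (k + 1))]
    rw [show safeProb κ A k (m + 1)
        = A.indicator (fun x' => ∫⁻ y, safeProb κ A (k + 1) m y ∂ (κ k x')) from rfl]
    by_cases hk : ω k ∈ A
    · simp [Set.indicator_apply, hk, mul_assoc]
    · simp [Set.indicator_apply, hk]

instance (T : Kernel (X × U) X) [IsMarkovKernel T] (π : Policy X U) (k : ℕ) :
    IsMarkovKernel (π.kernel T k) := by
  rw [Policy.kernel]; infer_instance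

lemma trajLaw_eq_safeProb (T : Kernel (X × U) X) [IsMarkovKernel T] (π : Policy X U)
    (N : ℕ) (A : Set X) (hA : MeasurableSet A) (k : ℕ) (hk : k ≤ N) (x : X) :
    trajLaw T π N k x (safeEvent A k N) = safeProb (π.kernel T) A k (N - k) x := by
  have h := evolve_safe (π.kernel T) A hA (N - k) k k le_rfl (fun _ => x)
  rw [Nat.add_sub_cancel' hk] at h
  rw [trajLaw, safeEvent, h,
    if_pos (fun j h1 h2 => absurd (lt_of_le_of_lt h1 h2) (lt_irrefl k)), one_mul]


variable [StandardBorelSpace X] [TopologicalSpace U]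
  [TopologicalSpace.MetrizableSpace U] [CompactSpace U] [Nonempty U] [BorelSpace U]

/-- Theorem 2, maximum invariance, attainment: if at each time `k < N`
a measurable selector `μ_k^*` attains the supremum in the DP recursion, then the
Markov policy `π^* = (μ_0^*, …, μ_{N-1}^*)` satisfies `V_k^{π^*} = W_k` everywhere;
in particular `W_k(x)` is the maximum over all Markov policies of the probability of
staying in `A` over `[k, N]`. -/
theorem max_dp_value_attained
    (T : Kernel (X × U) X) [IsMarkovKernel T]
    (N : ℕ) (A : Set X) (hA : MeasurableSet A)
    (W : ℕ → X → ℝ) (hWmeas : ∀ k, Measurable (W k))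
    (hWN : ∀ x, W N x = A.indicator 1 x)
    (hW : ∀ k < N, ∀ x,
      W k x = ⨆ u : U, A.indicator (fun x' => ∫ y, W (k + 1) y ∂(T (x', u))) x)
    (μstar : ℕ → X → U) (hμstar : ∀ k, Measurable (μstar k))
    (hopt : ∀ k < N, ∀ x,
      A.indicator (fun x' => ∫ y, W (k + 1) y ∂(T (x', μstar k x'))) x = W k x) :
    (∀ k ≤ N, ∀ x,
        (trajLaw T ⟨μstar, hμstar⟩ N k x (safeEvent A k N)).toReal = W k x) ∧
    (∀ k ≤ N, ∀ x,
        IsGreatest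
          (Set.range fun π : Policy X U =>
            (trajLaw T π N k x (safeEvent A k N)).toReal)
          (W k x)) := by
  -- boundedness of W
  have hbound : ∀ d k, k + d = N → ∀ x, 0 ≤ W k x ∧ W k x ≤ 1 := by
    intro d
    induction d with
    | zero =>
      intro k hkd x
      have hkN : k = N := by omega
      subst hkN
      by_cases hx : x ∈ A <;> simp [hWN, Set.indicator_apply, hx]
    | succ d ih =>
      intro k hkd x
      have hkN : k < N := by omega
      have hk1 : (k + 1) + d = N := by omega
      rw [← hopt k hkN x]
      by_cases hx : x ∈ A
      · rw [Set.indicator_of_mem hx]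
        have hint : Integrable (W (k + 1)) (T (x, μstar k x)) :=
          (integrable_const (1 : ℝ)).mono' (hWmeas (k + 1)).aestronglyMeasurable
            (ae_of_all _ fun y => abs_le.2
              ⟨by linarith [(ih (k + 1) hk1 y).1], (ih (k + 1) hk1 y).2⟩)
        constructor
        · exact integral_nonneg fun y => (ih (k + 1) hk1 y).1
        · calc ∫ y, W (k + 1) y ∂ (T (x, μstar k x))
              ≤ ∫ _, (1 : ℝ) ∂ (T (x, μstar k x)) :=
                integral_mono hint (integrable_const 1) fun y => (ih (k + 1) hk1 y).2
            _ = 1 := by simp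
      · simp [Set.indicator_of_notMem hx]
  have hb : ∀ k, k ≤ N → ∀ x, 0 ≤ W k x ∧ W k x ≤ 1 :=
    fun k hk => hbound (N - k) k (by omega)
  have hint : ∀ k, k ≤ N → ∀ (μ : Measure X), IsProbabilityMeasure μ →
      Integrable (W k) μ := by
    intro k hk μ hμ
    exact (integrable_const (1 : ℝ)).mono' (hWmeas k).aestronglyMeasurable
      (ae_of_all _ fun y => abs_le.2 ⟨by linarith [(hb k hk y).1], (hb k hk y).2⟩)
  have hofReal : ∀ k, k ≤ N → ∀ (μ : Measure X), IsProbabilityMeasure μ →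
      ∫⁻ y, ENNReal.ofReal (W k y) ∂ μ = ENNReal.ofReal (∫ y, W k y ∂ μ) := by
    intro k hk μ hμ
    exact (ofReal_integral_eq_lintegral_ofReal (hint k hk μ hμ)
      (ae_of_all _ fun y => (hb k hk y).1)).symm
  -- upper bound for any policy
  have hle : ∀ (π : Policy X U) d k, k + d = N → ∀ x,
      safeProb (π.kernel T) A k d x ≤ ENNReal.ofReal (W k x) := by
    intro π d
    induction d with
    | zero =>
      intro k hkd x
      have hkN : k = N := by omega
      subst hkN
      by_cases hx : x ∈ A <;> simp [safeProb, hWN, Set.indicator_apply, hx]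
    | succ d ih =>
      intro k hkd x
      have hkN : k < N := by omega
      rw [show safeProb (π.kernel T) A k (d + 1) = A.indicator
        (fun x' => ∫⁻ y, safeProb (π.kernel T) A (k + 1) d y ∂ ((π.kernel T) k x'))
        from rfl]
      by_cases hx : x ∈ A
      · rw [Set.indicator_of_mem hx, show (π.kernel T) k x = T (x, π.act k x) from
          Kernel.comap_apply _ _ _]
        have hbdd : BddAbove (Set.range fun u : U =>
            A.indicator (fun x' => ∫ y, W (k + 1) y ∂(T (x', u))) x) := by
          refine ⟨1, ?_⟩
          rintro v ⟨u, rfl⟩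
          show A.indicator (fun x' => ∫ y, W (k + 1) y ∂(T (x', u))) x ≤ 1
          by_cases hx' : x ∈ A
          · rw [Set.indicator_of_mem hx']
            calc ∫ y, W (k + 1) y ∂ (T (x, u))
                ≤ ∫ _, (1 : ℝ) ∂ (T (x, u)) :=
                  integral_mono (hint (k + 1) (by omega) _ inferInstance)
                    (integrable_const 1) fun y => (hb (k + 1) (by omega) y).2
              _ = 1 := by simp
          · simp [Set.indicator_of_notMem hx']
        have hsup : A.indicator
            (fun x' => ∫ y, W (k + 1) y ∂(T (x', π.act k x))) x ≤ W k x := by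
          rw [hW k hkN x]
          exact le_ciSup hbdd (π.act k x)
        calc ∫⁻ y, safeProb (π.kernel T) A (k + 1) d y ∂ (T (x, π.act k x))
            ≤ ∫⁻ y, ENNReal.ofReal (W (k + 1) y) ∂ (T (x, π.act k x)) :=
              lintegral_mono fun y => ih (k + 1) (by omega) y
          _ = ENNReal.ofReal (∫ y, W (k + 1) y ∂ (T (x, π.act k x))) :=
              hofReal (k + 1) (by omega) _ inferInstance
          _ ≤ ENNReal.ofReal (W k x) := by
              refine ENNReal.ofReal_le_ofReal ?_
              rw [← Set.indicator_of_mem hx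
                (fun x' => ∫ y, W (k + 1) y ∂(T (x', π.act k x)))] at *
              exact hsup
      · rw [Set.indicator_of_notMem hx]
        exact zero_le
  -- equality for the optimal policy
  have heq : ∀ d k, k + d = N → ∀ x,
      safeProb ((⟨μstar, hμstar⟩ : Policy X U).kernel T) A k d x
        = ENNReal.ofReal (W k x) := by
    intro d
    induction d with
    | zero =>
      intro k hkd x
      have hkN : k = N := by omega
      subst hkN
      by_cases hx : x ∈ A <;> simp [safeProb, hWN, Set.indicator_apply, hx]
    | succ d ih =>
      intro k hkd x
      have hkN : k < N := by omega
      rw [show safeProb ((⟨μstar, hμstar⟩ : Policy X U).kernel T) A k (d + 1)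
        = A.indicator (fun x' => ∫⁻ y, safeProb ((⟨μstar, hμstar⟩ : Policy X U).kernel T)
            A (k + 1) d y ∂ (((⟨μstar, hμstar⟩ : Policy X U).kernel T) k x'))
        from rfl]
      by_cases hx : x ∈ A
      · rw [Set.indicator_of_mem hx,
          show ((⟨μstar, hμstar⟩ : Policy X U).kernel T) k x = T (x, μstar k x) from
            Kernel.comap_apply _ _ _]
        have : ∫⁻ y, safeProb ((⟨μstar, hμstar⟩ : Policy X U).kernel T) A (k + 1) d y
            ∂ (T (x, μstar k x)) = ENNReal.ofReal (∫ y, W (k + 1) y ∂ (T (x, μstar k x))) := by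
          rw [← hofReal (k + 1) (by omega) _ inferInstance]
          exact lintegral_congr fun y => ih (k + 1) (by omega) y
        rw [this]
        congr 1
        rw [← hopt k hkN x, Set.indicator_of_mem hx]
      · rw [Set.indicator_of_notMem hx, ← hopt k hkN x, Set.indicator_of_notMem hx]
        simp
  have hval : ∀ k, k ≤ N → ∀ x,
      (trajLaw T ⟨μstar, hμstar⟩ N k x (safeEvent A k N)).toReal = W k x := by
    intro k hk x
    rw [trajLaw_eq_safeProb T _ N A hA k hk x, heq (N - k) k (by omega) x,
      ENNReal.toReal_ofReal (hb k hk x).1]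
  refine ⟨hval, ?_⟩
  intro k hk x
  constructor
  · exact ⟨⟨μstar, hμstar⟩, hval k hk x⟩
  · rintro v ⟨π, rfl⟩
    have h1 : trajLaw T π N k x (safeEvent A k N) ≤ ENNReal.ofReal (W k x) := by
      rw [trajLaw_eq_safeProb T π N A hA k hk x]
      exact hle π (N - k) k (by omega) x
    calc (trajLaw T π N k x (safeEvent A k N)).toReal
        ≤ (ENNReal.ofReal (W k x)).toReal :=
          ENNReal.toReal_mono ENNReal.ofReal_ne_top h1
      _ = W k x := ENNReal.toReal_ofReal (hb k hk x).1


end StochasticSafety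
end
end
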